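/- Let Λ be a symmetric positive definite matrix, and let G be the undirected graph on vertices {1,…,N} with an edge (i,j), i≠j, whenever Λ[i,j] ≠ 0 is permitted (i.e., edges given by the sparsity pattern of Λ). If L is the Cholesky factor of Λ (Λ = LLᵀ, L lower triangular with positive diagonal) and for some i > j the vertices i and j are in distinct connected components of G, then L[i,j] = 0. -/

import Mathlib

open Matrix

/-- If `Λ = L Lᵀ` is symmetric positive definite with Cholesky factor `L` (lower
triangular with positive diagonal) and `i > j` lie in distinct connected components of
the adjacency graph of `Λ`, then `L i j = 0`. -/
theorem cholesky_no_fill_across_components (N : ℕ)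
    (Λ : Matrix (Fin N) (Fin N) ℝ) (hΛ : Λ.PosDef)
    (L : Matrix (Fin N) (Fin N) ℝ)
    (hlower : ∀ i j : Fin N, i < j → L i j = 0)
    (hdiag : ∀ i : Fin N, 0 < L i i)
    (hLL : Λ = L * Lᵀ)
    (i j : Fin N) (hij : j < i)
    (hcomp : ¬ Relation.ReflTransGen (fun a b : Fin N => a ≠ b ∧ Λ a b ≠ 0) i j) :
    L i j = 0 := by
  have hsymm : ∀ a b, Λ a b = Λ b a := fun a b => by
    have := hΛ.1.apply b a
    simpa using this
  set R := fun a b : Fin N => a ≠ b ∧ Λ a b ≠ 0 with hR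
  have hRsymm : Symmetric R := by
    intro a b ⟨h1, h2⟩
    exact ⟨h1.symm, by rw [hsymm b a]; exact h2⟩
  have hCsymm : Symmetric (Relation.ReflTransGen R) :=
    by haveI : Std.Symm R := ⟨hRsymm⟩; exact fun a b h => (Relation.ReflTransGen.symmetric : Std.Symm (Relation.ReflTransGen R)).symm a b h
  suffices H : ∀ n : ℕ, ∀ j : Fin N, j.val = n → ∀ i : Fin N,
      ¬ Relation.ReflTransGen R i j → L i j = 0 from H j.val j rfl i hcomp
  intro n
  induction n using Nat.strong_induction_on with
  | _ n IH =>
    intro j hj i hc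
    rcases lt_trichotomy i j with h | h | h
    · exact hlower i j h
    · subst h; exact absurd Relation.ReflTransGen.refl hc
    · have hΛij : Λ i j = 0 := by
        by_contra hne
        exact hc (Relation.ReflTransGen.single ⟨ne_of_gt h, hne⟩)
      have hsum : Λ i j = ∑ k, L i k * L j k := by
        rw [hLL, Matrix.mul_apply]
        simp [Matrix.transpose_apply]
      have hone : ∑ k, L i k * L j k = L i j * L j j := by
        apply Finset.sum_eq_single
        · intro k _ hk
          rcases lt_trichotomy j k with hjk | hjk | hjk
          · rw [hlower j k hjk, mul_zero]
          · exact absurd hjk.symm hk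
          · have hkn : k.val < n := by rw [← hj]; exact hjk
            by_cases hjck : Relation.ReflTransGen R j k
            · have hik : ¬ Relation.ReflTransGen R i k := fun hik =>
                hc (hik.trans (hCsymm hjck))
              rw [IH k.val hkn k rfl i hik, zero_mul]
            · rw [IH k.val hkn k rfl j hjck, mul_zero]
        · intro h; exact absurd (Finset.mem_univ j) h
      have h0 : L i j * L j j = 0 := by rw [← hone, ← hsum, hΛij]
      exact (mul_eq_zero.mp h0).resolve_right (ne_of_gt (hdiag j))
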